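/- There is no pseudo strongly regular graph G containing two non-incident (vertex-disjoint) edges such that the line graph L(G) is pseudo strongly regular with parameter μ = 3. -/

import Mathlib

open SimpleGraph

def SimpleGraph.IsPseudoSRG {V : Type*} [Fintype V] (G : SimpleGraph V) (n k m : ℕ) : Prop :=
  Fintype.card V = n ∧ (∀ v : V, (G.neighborSet v).ncard = k) ∧
    ∀ u v : V, u ≠ v → ¬G.Adj u v → (G.commonNeighbors u v).ncard = m

set_option linter.unusedSectionVars false

section Aux
variable {V : Type*} [Fintype V] [DecidableEq V] {G : SimpleGraph V} [DecidableRel G.Adj]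


variable {V : Type*} [Fintype V] [DecidableEq V] {G : SimpleGraph V} [DecidableRel G.Adj]

private lemma sym2_ne' {w x y z : V} (h1 : ¬(w = y ∧ x = z)) (h2 : ¬(w = z ∧ x = y)) :
    s(w,x) ≠ s(y,z) := by
  intro h; rw [Sym2.eq_iff] at h; tauto

lemma cross_count (hL3 : ∀ u v : G.edgeSet, u ≠ v → ¬G.lineGraph.Adj u v →
      (G.lineGraph.commonNeighbors u v).ncard = 3)
    {a b c d : V} (hab : G.Adj a b) (hcd : G.Adj c d)
    (hac : a ≠ c) (had : a ≠ d) (hbc : b ≠ c) (hbd : b ≠ d) :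
    (¬G.Adj a c ∧ G.Adj a d ∧ G.Adj b c ∧ G.Adj b d) ∨
    (G.Adj a c ∧ ¬G.Adj a d ∧ G.Adj b c ∧ G.Adj b d) ∨
    (G.Adj a c ∧ G.Adj a d ∧ ¬G.Adj b c ∧ G.Adj b d) ∨
    (G.Adj a c ∧ G.Adj a d ∧ G.Adj b c ∧ ¬G.Adj b d) := by
  have hnab : a ≠ b := hab.ne
  have hncd : c ≠ d := hcd.ne
  have hne12 : (⟨s(a,b), hab⟩ : G.edgeSet) ≠ ⟨s(c,d), hcd⟩ := by
    simp only [Ne, Subtype.mk.injEq, Subtype.ext_iff, Sym2.eq_iff]; tauto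
  have hnadj : ¬ G.lineGraph.Adj ⟨s(a,b), hab⟩ ⟨s(c,d), hcd⟩ := by
    rw [lineGraph_adj_iff_exists]
    rintro ⟨-, v, hv1, hv2⟩
    simp only [Sym2.mem_iff] at hv1 hv2
    rcases hv1 with rfl | rfl <;> rcases hv2 with h | h
    · exact hac h
    · exact had h
    · exact hbc h
    · exact hbd h
  have hset : G.lineGraph.commonNeighbors ⟨s(a,b), hab⟩ ⟨s(c,d), hcd⟩ =
      (Subtype.val ⁻¹' {s(a,c), s(a,d), s(b,c), s(b,d)} : Set G.edgeSet) := by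
    ext f
    obtain ⟨fe, hfe⟩ := f
    induction fe using Sym2.ind with
    | _ p q =>
      simp only [commonNeighbors, Set.mem_inter_iff, mem_neighborSet,
        lineGraph_adj_iff_exists, Set.mem_preimage, Set.mem_insert_iff,
        Set.mem_singleton_iff, Sym2.mem_iff, Ne, Subtype.mk.injEq, Subtype.ext_iff]
      constructor
      · rintro ⟨⟨hne1, u, hu1, hu2⟩, ⟨hne2, v, hv1, hv2⟩⟩
        have huv : u ≠ v := by
          rcases hu1 with rfl | rfl <;> rcases hv1 with rfl | rfl <;> assumption
        have hf : s(p,q) = s(u,v) := by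
          rcases hu2 with rfl | rfl
          · rcases hv2 with rfl | rfl
            · exact absurd rfl huv
            · rfl
          · rcases hv2 with rfl | rfl
            · exact Sym2.eq_swap
            · exact absurd rfl huv
        rcases hu1 with rfl | rfl <;> rcases hv1 with rfl | rfl
        · exact Or.inl hf
        · exact Or.inr (Or.inl hf)
        · exact Or.inr (Or.inr (Or.inl hf))
        · exact Or.inr (Or.inr (Or.inr hf))
      · rintro (h | h | h | h) <;>
          rcases Sym2.eq_iff.mp h with ⟨rfl, rfl⟩ | ⟨rfl, rfl⟩
        · exact ⟨⟨sym2_ne' (by tauto) (by tauto), p, Or.inl rfl, Or.inl rfl⟩,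
            ⟨sym2_ne' (by tauto) (by tauto), q, Or.inl rfl, Or.inr rfl⟩⟩
        · exact ⟨⟨sym2_ne' (by tauto) (by tauto), q, Or.inl rfl, Or.inr rfl⟩,
            ⟨sym2_ne' (by tauto) (by tauto), p, Or.inl rfl, Or.inl rfl⟩⟩
        · exact ⟨⟨sym2_ne' (by tauto) (by tauto), p, Or.inl rfl, Or.inl rfl⟩,
            ⟨sym2_ne' (by tauto) (by tauto), q, Or.inr rfl, Or.inr rfl⟩⟩
        · exact ⟨⟨sym2_ne' (by tauto) (by tauto), q, Or.inl rfl, Or.inr rfl⟩,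
            ⟨sym2_ne' (by tauto) (by tauto), p, Or.inr rfl, Or.inl rfl⟩⟩
        · exact ⟨⟨sym2_ne' (by tauto) (by tauto), p, Or.inr rfl, Or.inl rfl⟩,
            ⟨sym2_ne' (by tauto) (by tauto), q, Or.inl rfl, Or.inr rfl⟩⟩
        · exact ⟨⟨sym2_ne' (by tauto) (by tauto), q, Or.inr rfl, Or.inr rfl⟩,
            ⟨sym2_ne' (by tauto) (by tauto), p, Or.inl rfl, Or.inl rfl⟩⟩
        · exact ⟨⟨sym2_ne' (by tauto) (by tauto), p, Or.inr rfl, Or.inl rfl⟩,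
            ⟨sym2_ne' (by tauto) (by tauto), q, Or.inr rfl, Or.inr rfl⟩⟩
        · exact ⟨⟨sym2_ne' (by tauto) (by tauto), q, Or.inr rfl, Or.inr rfl⟩,
            ⟨sym2_ne' (by tauto) (by tauto), p, Or.inr rfl, Or.inl rfl⟩⟩
  have h3' := hL3 ⟨s(a,b), hab⟩ ⟨s(c,d), hcd⟩ hne12 hnadj
  rw [hset] at h3'
  have him : (G.edgeSet ∩ ({s(a,c), s(a,d), s(b,c), s(b,d)} : Set (Sym2 V))).ncard = 3 := by
    rw [← Subtype.image_preimage_coe, Set.ncard_image_of_injective _ Subtype.val_injective]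
    exact h3'
  -- six distinctness facts
  have d1 : s(a,c) ≠ s(a,d) := sym2_ne' (by tauto) (by tauto)
  have d2 : s(a,c) ≠ s(b,c) := sym2_ne' (by tauto) (by tauto)
  have d3 : s(a,c) ≠ s(b,d) := sym2_ne' (by tauto) (by tauto)
  have d4 : s(a,d) ≠ s(b,c) := sym2_ne' (by tauto) (by tauto)
  have d5 : s(a,d) ≠ s(b,d) := sym2_ne' (by tauto) (by tauto)
  have d6 : s(b,c) ≠ s(b,d) := sym2_ne' (by tauto) (by tauto)
  set F : Finset (Sym2 V) := {s(a,c), s(a,d), s(b,c), s(b,d)} with hFdef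
  have hTF : G.edgeSet ∩ ({s(a,c), s(a,d), s(b,c), s(b,d)} : Set (Sym2 V)) =
      ↑(F.filter (· ∈ G.edgeSet)) := by
    ext e
    simp [hFdef, and_comm, Finset.mem_insert]
  rw [hTF, Set.ncard_coe_finset] at him
  have hF4 : F.card = 4 := by
    rw [hFdef]
    rw [Finset.card_insert_of_notMem (by simp [d1, d2, d3]),
      Finset.card_insert_of_notMem (by simp [d4, d5]),
      Finset.card_insert_of_notMem (by simp [d6]), Finset.card_singleton]
  have hsum := Finset.card_filter_add_card_filter_not (s := F)
    (p := (· ∈ G.edgeSet))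
  have hneg : (F.filter (fun e => ¬ e ∈ G.edgeSet)).card = 1 := by omega
  obtain ⟨x, hx⟩ := Finset.card_eq_one.mp hneg
  have hxmem : x ∈ F ∧ x ∉ G.edgeSet := by
    have := Finset.mem_filter.mp (hx ▸ Finset.mem_singleton_self x)
    exact this
  have hother : ∀ y ∈ F, y ≠ x → y ∈ G.edgeSet := by
    intro y hy hyx
    by_contra hyn
    have : y ∈ F.filter (fun e => ¬ e ∈ G.edgeSet) := Finset.mem_filter.mpr ⟨hy, hyn⟩
    rw [hx, Finset.mem_singleton] at this
    exact hyx this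
  have hmF : ∀ u v : V, s(u,v) ∈ ({s(a,c), s(a,d), s(b,c), s(b,d)} : Finset (Sym2 V)) →
      s(u,v) ∈ F := by intro u v h; rwa [hFdef]
  have hxcases : x = s(a,c) ∨ x = s(a,d) ∨ x = s(b,c) ∨ x = s(b,d) := by
    have := hxmem.1
    rw [hFdef] at this
    simpa [Finset.mem_insert] using this
  rcases hxcases with rfl | rfl | rfl | rfl
  · exact Or.inl ⟨fun h => hxmem.2 ((G.mem_edgeSet).mpr h),
      (G.mem_edgeSet).mp (hother _ (hmF a d (by simp)) d1.symm),
      (G.mem_edgeSet).mp (hother _ (hmF b c (by simp)) d2.symm),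
      (G.mem_edgeSet).mp (hother _ (hmF b d (by simp)) d3.symm)⟩
  · exact Or.inr (Or.inl ⟨(G.mem_edgeSet).mp (hother _ (hmF a c (by simp)) d1),
      fun h => hxmem.2 ((G.mem_edgeSet).mpr h),
      (G.mem_edgeSet).mp (hother _ (hmF b c (by simp)) d4.symm),
      (G.mem_edgeSet).mp (hother _ (hmF b d (by simp)) d5.symm)⟩)
  · exact Or.inr (Or.inr (Or.inl ⟨(G.mem_edgeSet).mp (hother _ (hmF a c (by simp)) d2),
      (G.mem_edgeSet).mp (hother _ (hmF a d (by simp)) d4),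
      fun h => hxmem.2 ((G.mem_edgeSet).mpr h),
      (G.mem_edgeSet).mp (hother _ (hmF b d (by simp)) d6.symm)⟩))
  · exact Or.inr (Or.inr (Or.inr ⟨(G.mem_edgeSet).mp (hother _ (hmF a c (by simp)) d3),
      (G.mem_edgeSet).mp (hother _ (hmF a d (by simp)) d5),
      (G.mem_edgeSet).mp (hother _ (hmF b c (by simp)) d6),
      fun h => hxmem.2 ((G.mem_edgeSet).mpr h)⟩))

lemma final_contra {k : ℕ}
    (hL3 : ∀ u v : G.edgeSet, u ≠ v → ¬G.lineGraph.Adj u v →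
      (G.lineGraph.commonNeighbors u v).ncard = 3)
    (hdeg : ∀ v : V, (G.neighborSet v).ncard = k)
    {a b c d : V} (hab : G.Adj a b) (hac : G.Adj a c) (had : G.Adj a d)
    (hbc : G.Adj b c) (hcd : G.Adj c d) (hbd : ¬G.Adj b d) (hnbd : b ≠ d) : False := by
  have hk : 3 ≤ k := by
    have hsub : ({b, c, d} : Set V) ⊆ G.neighborSet a := by
      intro x hx
      rcases hx with rfl | rfl | rfl
      · exact hab
      · exact hac
      · exact had
    have h3 : ({b, c, d} : Set V).ncard = 3 := by
      rw [Set.ncard_insert_of_notMem (by simp [hbc.ne, hnbd]),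
        Set.ncard_insert_of_notMem (by simp [hcd.ne]), Set.ncard_singleton]
    calc 3 = ({b, c, d} : Set V).ncard := h3.symm
      _ ≤ (G.neighborSet a).ncard := Set.ncard_le_ncard hsub (Set.toFinite _)
      _ = k := hdeg a
  have hx : ∃ x, x ∈ G.neighborSet b ∧ x ≠ a ∧ x ≠ c := by
    by_contra h
    push_neg at h
    have hsub : G.neighborSet b ⊆ {a, c} := by
      intro x hxx
      by_cases hxa : x = a
      · exact Or.inl hxa
      · exact Or.inr (h x hxx hxa)
    have h1 := Set.ncard_le_ncard hsub (Set.toFinite _)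
    rw [hdeg b, Set.ncard_pair hac.ne] at h1
    omega
  obtain ⟨x, hxb, hxa, hxc⟩ := hx
  have hbx : G.Adj b x := hxb
  have hxd : x ≠ d := fun h => hbd (h ▸ hbx)
  have hba : G.Adj b a := hab.symm
  have h1 := cross_count hL3 hbx hac hab.ne' hbc.ne hxa hxc
  have h2 := cross_count hL3 hbx had hab.ne' hnbd hxa hxd
  have h3 := cross_count hL3 hbx hcd hbc.ne hnbd hxc hxd
  tauto

end Aux

/-- there is no pseudo strongly regular graph `G` with two non-incident edges whose
line graph is pseudo strongly regular with parameter `μ = 3`. -/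
theorem stmt_11 {V : Type*} [Fintype V] [DecidableEq V] (G : SimpleGraph V) [DecidableRel G.Adj]
    (n k μ : ℕ) (hG : G.IsPseudoSRG n k μ)
    (hne : ∃ a b c d : V, G.Adj a b ∧ G.Adj c d ∧ a ≠ c ∧ a ≠ d ∧ b ≠ c ∧ b ≠ d) :
    ∀ m d : ℕ, ¬G.lineGraph.IsPseudoSRG m d 3 := by
  intro m dd hL
  obtain ⟨a, b, c, d, hab, hcd, hac, had, hbc, hbd⟩ := hne
  have hL3 := hL.2.2
  have hdeg := hG.2.1
  rcases cross_count hL3 hab hcd hac had hbc hbd with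
    ⟨h1, h2, h3, h4⟩ | ⟨h1, h2, h3, h4⟩ | ⟨h1, h2, h3, h4⟩ | ⟨h1, h2, h3, h4⟩
  · exact final_contra hL3 hdeg hab.symm h4 h3 h2 hcd.symm h1 hac
  · exact final_contra hL3 hdeg hab.symm h3 h4 h1 hcd h2 had
  · exact final_contra hL3 hdeg hab h2 h1 h4 hcd.symm h3 hbc
  · exact final_contra hL3 hdeg hab h1 h2 h3 hcd h4 hbd
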